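/- For every N ∈ ℕ, N ≥ 3, the point x_N lies in the interior of the largest gap of the points x₁, …, x_{N−1} on the torus; this largest gap has length (log(N) − log(N−1))/log(2), and x_N splits it into one gap of length (log(2N) − log(2N−1))/log(2) and one gap of length (log(2N−1) − log(2N−2))/log(2). -/

import Mathlib

/-- The sequence `x_n = {log(2n-1)/log 2}`. -/
noncomputable def xseq (n : ℕ) : ℝ := Int.fract (Real.log (2 * (n : ℝ) - 1) / Real.log 2)

/-- The gap to the right (on the torus `ℝ/ℤ`) of the point `x_k` among the points
`x_1, …, x_N`. -/
noncomputable def gapRight (N k : ℕ) : ℝ :=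
  sInf ((fun l => Int.fract (xseq l - xseq k)) '' (Set.Icc 1 N \ {k}))

namespace NPSLG
open Real

/-- The representative of `2n-1` (times a power of two) in the window `[P, 2P-1]`. -/
def K (P n : ℕ) : ℕ := (2*n-1) * 2 ^ (Nat.log 2 ((2*P-1)/(2*n-1)))

lemma K_mem {P n : ℕ} (hn : 1 ≤ n) (hnP : n ≤ P) : P ≤ K P n ∧ K P n ≤ 2*P-1 := by
  have hm : 1 ≤ 2*n-1 := by omega
  have hm2 : 2*n-1 ≤ 2*P-1 := by omega
  set j := Nat.log 2 ((2*P-1)/(2*n-1)) with hj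
  have hdiv : 1 ≤ (2*P-1)/(2*n-1) := (Nat.one_le_div_iff (by omega)).mpr hm2
  have h1 : 2 ^ j ≤ (2*P-1)/(2*n-1) := Nat.pow_log_le_self 2 (by omega)
  have hub : 2 ^ j * (2*n-1) ≤ 2*P-1 := (Nat.le_div_iff_mul_le (by omega)).mp h1
  have h2 : (2*P-1)/(2*n-1) < 2 ^ (j+1) := Nat.lt_pow_succ_log_self (by norm_num) _
  have hlb : 2*P-1 < 2 ^ (j+1) * (2*n-1) := (Nat.div_lt_iff_lt_mul (by omega)).mp h2
  have key : 2 ^ (j+1) * (2*n-1) = 2 * (2 ^ j * (2*n-1)) := by ring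
  have hKdef : K P n = 2 ^ j * (2*n-1) := by rw [K, mul_comm]
  omega

lemma K_uniq {P n a : ℕ} (hn : 1 ≤ n) (hnP : n ≤ P)
    (h1 : P ≤ (2*n-1)*2^a) (h2 : (2*n-1)*2^a ≤ 2*P-1) : (2*n-1)*2^a = K P n := by
  obtain ⟨hK1, hK2⟩ := K_mem hn hnP
  set j := Nat.log 2 ((2*P-1)/(2*n-1)) with hj
  have hKdef : K P n = (2*n-1) * 2 ^ j := rfl
  rcases lt_trichotomy a j with h | h | h
  · exfalso
    have hp : 2 * 2 ^ a ≤ 2 ^ j := by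
      calc 2 * 2 ^ a = 2 ^ (a+1) := by ring
        _ ≤ 2 ^ j := Nat.pow_le_pow_right (by norm_num) (by omega)
    have hkey : 2 * ((2*n-1) * 2 ^ a) ≤ (2*n-1) * 2 ^ j := by
      calc 2 * ((2*n-1) * 2 ^ a) = (2*n-1) * (2 * 2 ^ a) := by ring
        _ ≤ (2*n-1) * 2 ^ j := Nat.mul_le_mul_left _ hp
    omega
  · rw [h, hKdef]
  · exfalso
    have hp : 2 * 2 ^ j ≤ 2 ^ a := by
      calc 2 * 2 ^ j = 2 ^ (j+1) := by ring
        _ ≤ 2 ^ a := Nat.pow_le_pow_right (by norm_num) (by omega)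
    have hkey : 2 * ((2*n-1) * 2 ^ j) ≤ (2*n-1) * 2 ^ a := by
      calc 2 * ((2*n-1) * 2 ^ j) = (2*n-1) * (2 * 2 ^ j) := by ring
        _ ≤ (2*n-1) * 2 ^ a := Nat.mul_le_mul_left _ hp
    omega

lemma K_surj {P k : ℕ} (hP : 1 ≤ P) (h1 : P ≤ k) (h2 : k ≤ 2*P-1) :
    ∃ n, 1 ≤ n ∧ n ≤ P ∧ K P n = k := by
  have hk0 : k ≠ 0 := by omega
  set v := k.factorization 2 with hv
  set m := k / 2 ^ v with hm
  have hmk : 2 ^ v * m = k := Nat.ordProj_mul_ordCompl_eq_self k 2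
  have hodd : ¬ 2 ∣ m := Nat.not_dvd_ordCompl Nat.prime_two hk0
  have hm1 : 1 ≤ m := by
    rcases Nat.eq_zero_or_pos m with h | h
    · exfalso; rw [h, mul_zero] at hmk; omega
    · exact h
  have hmle : m ≤ k := by
    have h2v : 1 ≤ 2 ^ v := Nat.one_le_two_pow
    calc m = 1 * m := (one_mul m).symm
      _ ≤ 2 ^ v * m := Nat.mul_le_mul_right _ h2v
      _ = k := hmk
  have hn1 : 1 ≤ (m+1)/2 := by omega
  have hnP : (m+1)/2 ≤ P := by omega
  refine ⟨(m+1)/2, hn1, hnP, ?_⟩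
  have hm' : 2*((m+1)/2) - 1 = m := by omega
  have hkeq : (2*((m+1)/2)-1) * 2 ^ v = k := by rw [hm', mul_comm]; exact hmk
  have := K_uniq (n := (m+1)/2) (a := v) hn1 hnP
    (by rw [hkeq]; exact h1) (by rw [hkeq]; exact h2)
  rw [← this, hkeq]

lemma K_inj_aux {l n a b : ℕ} (hl : 1 ≤ l) (hn : 1 ≤ n) (hab : a ≤ b)
    (h : (2*l-1)*2^a = (2*n-1)*2^b) : l = n := by
  have hb : 2 ^ b = 2 ^ (b-a) * 2 ^ a := by rw [← pow_add]; congr 1; omega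
  rw [hb, ← mul_assoc] at h
  have h' : 2*l-1 = (2*n-1) * 2 ^ (b-a) :=
    Nat.eq_of_mul_eq_mul_right (pow_pos (by norm_num) a) h
  rcases Nat.eq_zero_or_pos (b - a) with h0 | h0
  · rw [h0, pow_zero, mul_one] at h'; omega
  · exfalso
    have hkey : (2*n-1) * 2 ^ (b-a) = 2 * ((2*n-1) * 2 ^ (b-a-1)) := by
      have h2 : 2 ^ (b-a) = 2 * 2 ^ (b-a-1) := by
        rw [← pow_succ']; congr 1; omega
      rw [h2]; ring
    omega

lemma K_inj {P l n : ℕ} (hl : 1 ≤ l) (hn : 1 ≤ n) (h : K P l = K P n) : l = n := by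
  rw [K, K] at h
  rcases le_total (Nat.log 2 ((2*P-1)/(2*l-1))) (Nat.log 2 ((2*P-1)/(2*n-1))) with hab | hab
  · exact K_inj_aux hl hn hab h
  · exact (K_inj_aux hn hl hab h.symm).symm

lemma xseq_eq' {n : ℕ} (hn : 1 ≤ n) :
    xseq n = Int.fract (Real.logb 2 ((2*n-1 : ℕ) : ℝ)) := by
  have h : ((2*n-1 : ℕ) : ℝ) = 2 * (n : ℝ) - 1 := by
    push_cast [Nat.cast_sub (by omega : 1 ≤ 2*n)]; ring
  rw [xseq, Real.logb, h]

lemma xseq_eq {P n : ℕ} (hn : 1 ≤ n) :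
    xseq n = Int.fract (Real.logb 2 ((K P n : ℕ) : ℝ)) := by
  rw [xseq_eq' hn]
  set j := Nat.log 2 ((2*P-1)/(2*n-1)) with hj
  have hc : ((K P n : ℕ) : ℝ) = ((2*n-1 : ℕ) : ℝ) * (2:ℝ) ^ j := by
    rw [K]; push_cast; ring
  have hne : ((2*n-1 : ℕ) : ℝ) ≠ 0 := by
    have h1 : (1:ℕ) ≤ 2*n-1 := by omega
    have : (1:ℝ) ≤ ((2*n-1 : ℕ) : ℝ) := by exact_mod_cast h1
    linarith
  rw [hc, Real.logb_mul hne (by positivity)]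
  have hpow : Real.logb 2 ((2:ℝ) ^ j) = (j : ℝ) := by
    rw [Real.logb_pow, Real.logb_self_eq_one (by norm_num)]; ring
  rw [hpow, Int.fract_add_natCast]

lemma fract_fract_sub (A B : ℝ) :
    Int.fract (Int.fract A - Int.fract B) = Int.fract (A - B) := by
  have h : Int.fract A - Int.fract B = (A - B) - ((⌊A⌋ - ⌊B⌋ : ℤ) : ℝ) := by
    rw [Int.fract, Int.fract]; push_cast; ring
  rw [h, Int.fract_sub_intCast]

lemma fract_xseq_sub {l n : ℕ} (hl : 1 ≤ l) (hn : 1 ≤ n) (P : ℕ) :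
    Int.fract (xseq l - xseq n) =
      Int.fract (Real.logb 2 ((K P l : ℕ) : ℝ) - Real.logb 2 ((K P n : ℕ) : ℝ)) := by
  rw [xseq_eq (P := P) hl, xseq_eq (P := P) hn, fract_fract_sub]

lemma logb_two_mul {x : ℝ} (hx : 0 < x) : Real.logb 2 (2*x) = 1 + Real.logb 2 x := by
  rw [Real.logb_mul (by norm_num) (ne_of_gt hx), Real.logb_self_eq_one (by norm_num)]

/-- fract of a difference of logs, increasing case. -/
lemma fract_logb_sub_pos {a b : ℕ} (hb : 1 ≤ b) (h1 : b < a) (h2 : a < 2*b) :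
    Int.fract (Real.logb 2 (a:ℝ) - Real.logb 2 (b:ℝ)) =
      Real.logb 2 (a:ℝ) - Real.logb 2 (b:ℝ) := by
  have hbR : (0:ℝ) < b := by exact_mod_cast hb
  have haR : (b:ℝ) < a := by exact_mod_cast h1
  have h2R : (a:ℝ) < 2*b := by exact_mod_cast h2
  rw [Int.fract_eq_self]
  constructor
  · have := Real.logb_le_logb_of_le (b := 2) (by norm_num) hbR (le_of_lt haR)
    linarith
  · have hlt : Real.logb 2 (a:ℝ) < Real.logb 2 (2*(b:ℝ)) :=
      Real.logb_lt_logb (by norm_num) (by linarith) h2R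
    rw [logb_two_mul hbR] at hlt
    linarith

/-- fract of a difference of logs, decreasing (wrap-around) case. -/
lemma fract_logb_sub_neg {a b : ℕ} (ha : 1 ≤ a) (h1 : a < b) (h2 : b < 2*a) :
    Int.fract (Real.logb 2 (a:ℝ) - Real.logb 2 (b:ℝ)) =
      Real.logb 2 (2*(a:ℝ)) - Real.logb 2 (b:ℝ) := by
  have haR : (0:ℝ) < a := by exact_mod_cast ha
  have h1R : (a:ℝ) < b := by exact_mod_cast h1
  have h2R : (b:ℝ) < 2*a := by exact_mod_cast h2
  have key : Real.logb 2 (a:ℝ) - Real.logb 2 (b:ℝ) + 1 =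
      Real.logb 2 (2*(a:ℝ)) - Real.logb 2 (b:ℝ) := by
    rw [logb_two_mul haR]; ring
  have h0 : (0:ℝ) ≤ Real.logb 2 (a:ℝ) - Real.logb 2 (b:ℝ) + 1 := by
    have hlt : Real.logb 2 (b:ℝ) < Real.logb 2 (2*(a:ℝ)) :=
      Real.logb_lt_logb (by norm_num) (by linarith) h2R
    rw [logb_two_mul haR] at hlt; linarith
  have h1' : Real.logb 2 (a:ℝ) - Real.logb 2 (b:ℝ) + 1 < 1 := by
    have hlt : Real.logb 2 (a:ℝ) < Real.logb 2 (b:ℝ) :=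
      Real.logb_lt_logb (by norm_num) haR h1R
    linarith
  calc Int.fract (Real.logb 2 (a:ℝ) - Real.logb 2 (b:ℝ))
      = Int.fract (Real.logb 2 (a:ℝ) - Real.logb 2 (b:ℝ) + 1) := (Int.fract_add_one _).symm
    _ = Real.logb 2 (a:ℝ) - Real.logb 2 (b:ℝ) + 1 := Int.fract_eq_self.mpr ⟨h0, h1'⟩
    _ = _ := key

lemma gap_eq {P n : ℕ} (hP : 2 ≤ P) (hn : 1 ≤ n) (hnP : n ≤ P) :
    gapRight P n = Real.logb 2 ((K P n : ℝ) + 1) - Real.logb 2 (K P n : ℝ) := by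
  obtain ⟨hK1, hK2⟩ := K_mem hn hnP
  -- a witness realizing the infimum
  have hwit : ∃ l, (1 ≤ l ∧ l ≤ P) ∧ l ≠ n ∧
      Int.fract (xseq l - xseq n) =
        Real.logb 2 ((K P n : ℝ) + 1) - Real.logb 2 (K P n : ℝ) := by
    by_cases hcase : K P n = 2*P-1
    · obtain ⟨l, hl1, hlP, hlK⟩ := K_surj (P := P) (by omega) (le_refl P) (by omega)
      refine ⟨l, ⟨hl1, hlP⟩, fun h => by rw [h] at hlK; omega, ?_⟩
      rw [fract_xseq_sub hl1 hn P, hlK,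
        fract_logb_sub_neg (by omega) (by omega) (by omega)]
      have hc : (2*(P:ℝ)) = (K P n : ℝ) + 1 := by
        have : K P n + 1 = 2*P := by omega
        have := congrArg (fun t : ℕ => (t:ℝ)) this
        push_cast at this
        linarith
      rw [hc]
    · obtain ⟨l, hl1, hlP, hlK⟩ := K_surj (P := P) (k := K P n + 1) (by omega) (by omega) (by omega)
      refine ⟨l, ⟨hl1, hlP⟩, fun h => by rw [h] at hlK; omega, ?_⟩
      rw [fract_xseq_sub hl1 hn P, hlK,
        fract_logb_sub_pos (by omega) (by omega) (by omega)]
      push_cast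
      ring
  obtain ⟨l0, ⟨hl01, hl0P⟩, hl0ne, hl0val⟩ := hwit
  have hmem : Real.logb 2 ((K P n : ℝ) + 1) - Real.logb 2 (K P n : ℝ) ∈
      (fun l => Int.fract (xseq l - xseq n)) '' (Set.Icc 1 P \ {n}) := by
    exact ⟨l0, by simp [Set.mem_diff, Set.mem_Icc, hl01, hl0P, hl0ne], hl0val⟩
  have hlb : ∀ y ∈ (fun l => Int.fract (xseq l - xseq n)) '' (Set.Icc 1 P \ {n}),
      Real.logb 2 ((K P n : ℝ) + 1) - Real.logb 2 (K P n : ℝ) ≤ y := by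
    rintro y ⟨l, hl, rfl⟩
    obtain ⟨hlIcc, hlne⟩ := hl
    rw [Set.mem_Icc] at hlIcc
    obtain ⟨hl1, hlP⟩ := hlIcc
    have hlne' : l ≠ n := by simpa using hlne
    obtain ⟨hKl1, hKl2⟩ := K_mem hl1 hlP
    have hKne : K P l ≠ K P n := fun h => hlne' (K_inj hl1 hn h)
    simp only
    rw [fract_xseq_sub hl1 hn P]
    rcases lt_or_gt_of_ne hKne with hlt | hgt
    · -- K P l < K P n : wrap-around
      rw [fract_logb_sub_neg (by omega) hlt (by omega)]
      have hmono : Real.logb 2 ((K P n : ℝ) + 1) ≤ Real.logb 2 (2*(K P l : ℝ)) := by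
        apply Real.logb_le_logb_of_le (by norm_num) (by positivity)
        have h1 : K P n + 1 ≤ 2 * K P l := by omega
        exact_mod_cast h1
      linarith
    · rw [fract_logb_sub_pos (by omega) hgt (by omega)]
      have hmono : Real.logb 2 ((K P n : ℝ) + 1) ≤ Real.logb 2 ((K P l : ℝ)) := by
        apply Real.logb_le_logb_of_le (by norm_num) (by positivity)
        have h1 : K P n + 1 ≤ K P l := by omega
        exact_mod_cast h1
      linarith
  exact IsLeast.csInf_eq ⟨hmem, hlb⟩

end NPSLG

open NPSLG Real in
theorem new_point_splits_largest_gap (N : ℕ) (hN : 3 ≤ N) :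
    ∃ m ∈ Finset.Icc 1 (N - 1),
      gapRight (N - 1) m = (Real.log (N : ℝ) - Real.log ((N : ℝ) - 1)) / Real.log 2 ∧
      (∀ k ∈ Finset.Icc 1 (N - 1), gapRight (N - 1) k ≤ gapRight (N - 1) m) ∧
      0 < Int.fract (xseq N - xseq m) ∧
      Int.fract (xseq N - xseq m) < gapRight (N - 1) m ∧
      Int.fract (xseq N - xseq m) =
        (Real.log (2 * (N : ℝ) - 1) - Real.log (2 * (N : ℝ) - 2)) / Real.log 2 ∧
      gapRight (N - 1) m - Int.fract (xseq N - xseq m) =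
        (Real.log (2 * (N : ℝ)) - Real.log (2 * (N : ℝ) - 1)) / Real.log 2 := by
  set P := N - 1 with hPdef
  have hP : 2 ≤ P := by omega
  have hPN : (P:ℝ) = (N:ℝ) - 1 := by
    rw [hPdef]; push_cast [Nat.cast_sub (by omega : 1 ≤ N)]; ring
  have hNR : (3:ℝ) ≤ (N:ℝ) := by exact_mod_cast hN
  obtain ⟨m, hm1, hmP, hmK⟩ := K_surj (P := P) (by omega) (le_refl P) (by omega)
  -- identities
  have hid1 : Real.logb 2 (2*(N:ℝ)) = 1 + Real.logb 2 (N:ℝ) :=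
    logb_two_mul (by linarith)
  have hid2 : Real.logb 2 (2*(N:ℝ)-2) = 1 + Real.logb 2 ((N:ℝ)-1) := by
    rw [show 2*(N:ℝ)-2 = 2*((N:ℝ)-1) by ring]
    exact logb_two_mul (by linarith)
  -- gap value
  have hgap : gapRight P m = Real.logb 2 (N:ℝ) - Real.logb 2 ((N:ℝ)-1) := by
    rw [gap_eq hP hm1 hmP, hmK, hPN, show ((N:ℝ)-1)+1 = (N:ℝ) by ring]
  -- fract value
  have hfr : Int.fract (xseq N - xseq m) =
      Real.logb 2 (2*(N:ℝ)-1) - Real.logb 2 (2*(N:ℝ)-2) := by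
    have hxN : xseq N = Int.fract (Real.logb 2 ((2*N-1 : ℕ) : ℝ)) := xseq_eq' (by omega)
    have hxm : xseq m = Int.fract (Real.logb 2 ((K P m : ℕ) : ℝ)) := xseq_eq hm1
    have hcast1 : ((2*N-1 : ℕ) : ℝ) = 2*(N:ℝ)-1 := by
      push_cast [Nat.cast_sub (by omega : 1 ≤ 2*N)]; ring
    have h0 : Int.fract (xseq N - xseq m) =
        Int.fract (Real.logb 2 (2*(N:ℝ)-1) - Real.logb 2 ((N:ℝ)-1)) := by
      rw [hxN, hxm, hmK, fract_fract_sub, hcast1, hPN]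
    set A := Real.logb 2 (2*(N:ℝ)-1) - Real.logb 2 ((N:ℝ)-1) with hA
    have h1A : 1 < A := by
      have hlt : Real.logb 2 (2*(N:ℝ)-2) < Real.logb 2 (2*(N:ℝ)-1) :=
        Real.logb_lt_logb (by norm_num) (by linarith) (by linarith)
      rw [hid2] at hlt
      rw [hA]; linarith
    have h2A : A < 2 := by
      have hid3 : Real.logb 2 (4*(N:ℝ)-4) = 2 + Real.logb 2 ((N:ℝ)-1) := by
        rw [show 4*(N:ℝ)-4 = 2*(2*((N:ℝ)-1)) by ring, logb_two_mul (by linarith),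
          logb_two_mul (by linarith)]
        ring
      have hlt : Real.logb 2 (2*(N:ℝ)-1) < Real.logb 2 (4*(N:ℝ)-4) :=
        Real.logb_lt_logb (by norm_num) (by linarith) (by linarith)
      rw [hid3] at hlt
      rw [hA]; linarith
    have hAfr : Int.fract A = A - 1 := by
      have h1 : Int.fract (A - ((1:ℤ):ℝ)) = Int.fract A := Int.fract_sub_intCast A 1
      have h2 : Int.fract (A - ((1:ℤ):ℝ)) = A - 1 := by
        push_cast
        exact Int.fract_eq_self.mpr ⟨by linarith, by linarith⟩
      rw [← h1, h2]
    rw [h0, hAfr, hA, hid2]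
    ring
  have hposgap : Real.logb 2 (2*(N:ℝ)-2) < Real.logb 2 (2*(N:ℝ)-1) :=
    Real.logb_lt_logb (by norm_num) (by linarith) (by linarith)
  refine ⟨m, Finset.mem_Icc.mpr ⟨hm1, hmP⟩, ?_, ?_, ?_, ?_, ?_, ?_⟩
  · rw [hgap, Real.logb, Real.logb, ← sub_div]
  · intro k hk
    rw [Finset.mem_Icc] at hk
    obtain ⟨hKk1, hKk2⟩ := K_mem hk.1 hk.2
    rw [gap_eq hP hk.1 hk.2, gap_eq hP hm1 hmP, hmK]
    have haR : (0:ℝ) < (K P k : ℝ) := by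
      have : 0 < K P k := by omega
      exact_mod_cast this
    have hPR : (0:ℝ) < (P : ℝ) := by
      have : 0 < P := by omega
      exact_mod_cast this
    have hle : (P:ℝ) ≤ (K P k : ℝ) := by exact_mod_cast hKk1
    rw [show Real.logb 2 ((K P k : ℝ) + 1) - Real.logb 2 (K P k : ℝ) =
        Real.logb 2 (((K P k : ℝ) + 1) / (K P k : ℝ)) from
        (Real.logb_div (by linarith) (by linarith)).symm,
      show Real.logb 2 ((P : ℝ) + 1) - Real.logb 2 (P : ℝ) =
        Real.logb 2 (((P : ℝ) + 1) / (P : ℝ)) from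
        (Real.logb_div (by linarith) (by linarith)).symm]
    apply Real.logb_le_logb_of_le (by norm_num) (by positivity)
    rw [div_le_div_iff₀ haR hPR]
    nlinarith
  · rw [hfr]; linarith
  · rw [hfr, hgap]
    have h2N : Real.logb 2 (2*(N:ℝ)-1) < Real.logb 2 (2*(N:ℝ)) :=
      Real.logb_lt_logb (by norm_num) (by linarith) (by linarith)
    linarith
  · rw [hfr, Real.logb, Real.logb, ← sub_div]
  · rw [hfr, hgap]
    have hconv : (Real.log (2*(N:ℝ)) - Real.log (2*(N:ℝ)-1)) / Real.log 2 =
        Real.logb 2 (2*(N:ℝ)) - Real.logb 2 (2*(N:ℝ)-1) := by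
      rw [Real.logb, Real.logb, ← sub_div]
    rw [hconv]
    linarith
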